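/- For all z in the closed unit disc of ℂ, |3 + 6z - z²| ≤ 8, with equality if and only if z = 1. -/

import Mathlib

theorem abs_three_add_six_sub_sq (z : ℂ) (hz : ‖z‖ ≤ 1) :
    ‖3 + 6 * z - z ^ 2‖ ≤ 8 ∧
    (‖3 + 6 * z - z ^ 2‖ = 8 ↔ z = 1) := by
  set x := z.re with hxdef
  set y := z.im with hydef
  have ht : x ^ 2 + y ^ 2 ≤ 1 := by
    have h1 := Complex.sq_norm z
    rw [Complex.normSq_apply] at h1
    nlinarith [norm_nonneg z]
  have hx1 : x ≤ 1 := by nlinarith [sq_nonneg y]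
  have hf : ‖3 + 6 * z - z ^ 2‖ ^ 2 =
      (3 + 6 * x - x ^ 2 + y ^ 2) ^ 2 + (6 * y - 2 * x * y) ^ 2 := by
    rw [Complex.sq_norm, Complex.normSq_apply]
    simp [Complex.add_re, Complex.add_im, Complex.sub_re, Complex.sub_im,
      Complex.mul_re, Complex.mul_im, pow_two]
    ring
  have hnn := norm_nonneg (3 + 6 * z - z ^ 2)
  have hle : ‖3 + 6 * z - z ^ 2‖ ^ 2 ≤ 64 := by
    rw [hf]
    nlinarith [sq_nonneg (1 - x), mul_nonneg (by nlinarith : (0:ℝ) ≤ 1 - (x^2+y^2))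
      (by nlinarith : (0:ℝ) ≤ 43 + (x^2+y^2) - 12 * x)]
  constructor
  · nlinarith
  · constructor
    · intro h8
      have hf64 : (3 + 6 * x - x ^ 2 + y ^ 2) ^ 2 + (6 * y - 2 * x * y) ^ 2 = 64 := by
        rw [← hf, h8]; norm_num
    -- 64 - f = 12(1-x)^2 + (1-t)(43+t-12x)
      have hxeq : x = 1 := by
        nlinarith [mul_nonneg (by nlinarith : (0:ℝ) ≤ 1 - (x^2+y^2))
          (by nlinarith : (0:ℝ) ≤ 43 + (x^2+y^2) - 12 * x), sq_nonneg (1 - x)]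
      have hyeq : y = 0 := by
        nlinarith [sq_nonneg y]
      exact Complex.ext (by rw [← hxdef, hxeq, Complex.one_re])
        (by rw [← hydef, hyeq, Complex.one_im])
    · intro h; subst h; norm_num
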